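/- Let u ∈ ℝ^{m×r}, v ∈ ℝ^{n×r} be balanced, i.e., uᵀu = vᵀv. Then rank(u) = rank(v) = rank(uvᵀ). -/
import Mathlib

open Matrix

/-- If `(u, v)` is balanced (`uᵀu = vᵀv`), then `rank u = rank v = rank (u vᵀ)`. -/
theorem balanced_rank_eq {m n r : ℕ}
    (u : Matrix (Fin m) (Fin r) ℝ) (v : Matrix (Fin n) (Fin r) ℝ)
    (hbal : uᵀ * u = vᵀ * v) :
    u.rank = v.rank ∧ u.rank = (u * vᵀ).rank := by
  constructor
  · rw [← Matrix.rank_transpose_mul_self u, hbal, Matrix.rank_transpose_mul_self]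
  · have h2 : (u * vᵀ) * (u * vᵀ)ᵀ = (u * uᵀ) * (u * uᵀ)ᵀ := by
      rw [Matrix.transpose_mul, Matrix.transpose_transpose, Matrix.transpose_mul,
        Matrix.transpose_transpose, Matrix.mul_assoc, Matrix.mul_assoc,
        ← Matrix.mul_assoc vᵀ, ← hbal, Matrix.mul_assoc, ← Matrix.mul_assoc uᵀ,
        Matrix.mul_assoc]
    calc u.rank = (u * uᵀ).rank := (Matrix.rank_self_mul_transpose u).symm
      _ = ((u * uᵀ) * (u * uᵀ)ᵀ).rank := (Matrix.rank_self_mul_transpose _).symm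
      _ = ((u * vᵀ) * (u * vᵀ)ᵀ).rank := by rw [h2]
      _ = (u * vᵀ).rank := Matrix.rank_self_mul_transpose _
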